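/- Let Λ be an Artin algebra of finite global dimension with r² = 0, and let M be an indecomposable Λ-module with simple top M/rM. Then the first two terms P₀(M) and P₁(M) of a minimal projective resolution of M have no nonzero direct summand in common. -/

import Mathlib

open CategoryTheory

section ARPrelude

variable (Λ : Type) [Ring Λ]

/-- The Jacobson radical of `Λ` squares to zero. -/
def RadicalSquareZero : Prop :=
  ∀ a ∈ Ideal.jacobson (⊥ : Ideal Λ), ∀ b ∈ Ideal.jacobson (⊥ : Ideal Λ), a * b = 0

section ModDefs

variable (M : Type) [AddCommGroup M] [Module Λ M]

/-- The submodule `rM` of `M`, where `r` is the Jacobson radical of `Λ`. -/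
def radSub : Submodule Λ M :=
  Submodule.span Λ {x : M | ∃ a ∈ Ideal.jacobson (⊥ : Ideal Λ), ∃ m : M, x = a • m}

/-- `M` is an indecomposable (nonzero) module. -/
def IsIndec : Prop :=
  Nontrivial M ∧ ∀ N₁ N₂ : Submodule Λ M, IsCompl N₁ N₂ → N₁ = ⊥ ∨ N₂ = ⊥

/-- The socle of `M`: the sum of all simple submodules. -/
def socle : Submodule Λ M :=
  sSup {N : Submodule Λ M | IsSimpleModule Λ ↥N}

end ModDefs

/-- `f : P → M` is a projective cover: `P` projective, `f` a superfluous epimorphism. -/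
structure IsProjCover {P M : Type} [AddCommGroup P] [Module Λ P] [AddCommGroup M] [Module Λ M]
    (f : P →ₗ[Λ] M) : Prop where
  proj : Module.Projective Λ P
  surj : Function.Surjective f
  superfluous : ∀ N : Submodule Λ P, N ⊔ LinearMap.ker f = ⊤ → N = ⊤

/-- `0 → A → E → C → 0` (given by `f`, `g`) is an almost split (Auslander–Reiten) sequence. -/
structure IsAlmostSplitSeq {A E C : Type} [AddCommGroup A] [Module Λ A]
    [AddCommGroup E] [Module Λ E] [AddCommGroup C] [Module Λ C]
    (f : A →ₗ[Λ] E) (g : E →ₗ[Λ] C) : Prop where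
  inj : Function.Injective f
  surj : Function.Surjective g
  exact : LinearMap.range f = LinearMap.ker g
  not_split : ¬ ∃ s : C →ₗ[Λ] E, g ∘ₗ s = LinearMap.id
  indecA : IsIndec Λ A
  indecC : IsIndec Λ C
  left_almost : ∀ (X : ModuleCat.{0} Λ) (h : A →ₗ[Λ] ↥X),
    (¬ ∃ r : ↥X →ₗ[Λ] A, r ∘ₗ h = LinearMap.id) → ∃ t : E →ₗ[Λ] ↥X, t ∘ₗ f = h
  right_almost : ∀ (X : ModuleCat.{0} Λ) (h : ↥X →ₗ[Λ] C),
    (¬ ∃ s : C →ₗ[Λ] ↥X, h ∘ₗ s = LinearMap.id) → ∃ t : ↥X →ₗ[Λ] E, g ∘ₗ t = h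

/-- `A` is the Auslander–Reiten translate `τ C` of `C`, witnessed by an almost split
sequence `0 → A → E → C → 0`. -/
def IsARTranslate (A C : Type) [AddCommGroup A] [Module Λ A] [AddCommGroup C] [Module Λ C] :
    Prop :=
  ∃ (E : ModuleCat.{0} Λ) (f : A →ₗ[Λ] ↥E) (g : ↥E →ₗ[Λ] C), IsAlmostSplitSeq Λ f g

/-- `M` is τ-rigid: every homomorphism `M → τ M` vanishes (vacuous if `M` is projective,
in which case `τ M = 0`). -/
def IsTauRigid (M : Type) [AddCommGroup M] [Module Λ M] : Prop :=
  ∀ (K : ModuleCat.{0} Λ), IsARTranslate Λ (↥K) M → ∀ f : M →ₗ[Λ] ↥K, f = 0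

/-- `Q` is (isomorphic to) a direct summand of `P`. -/
def IsDSummand (Q P : Type) [AddCommGroup Q] [Module Λ Q] [AddCommGroup P] [Module Λ P] :
    Prop :=
  ∃ (i : Q →ₗ[Λ] P) (r : P →ₗ[Λ] Q), r ∘ₗ i = LinearMap.id

/-- Every short exact sequence `0 → N → E → M → 0` splits, i.e. `Ext¹(M, N) = 0`. -/
def Ext1Vanishes (M N : Type) [AddCommGroup M] [Module Λ M] [AddCommGroup N] [Module Λ N] :
    Prop :=
  ∀ (E : ModuleCat.{0} Λ) (i : N →ₗ[Λ] ↥E) (p : ↥E →ₗ[Λ] M),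
    Function.Injective i → Function.Surjective p → LinearMap.range i = LinearMap.ker p →
    ∃ s : M →ₗ[Λ] ↥E, p ∘ₗ s = LinearMap.id

/-- Projective dimension at most `n`. -/
def ProjDimLE : ℕ → ModuleCat.{0} Λ → Prop
  | 0, M => Module.Projective Λ ↥M
  | n + 1, M => ∃ (P : ModuleCat.{0} Λ) (f : ↥P →ₗ[Λ] ↥M), Module.Projective Λ ↥P ∧
      Function.Surjective f ∧ ProjDimLE n (ModuleCat.of Λ (LinearMap.ker f))

/-- Injective dimension at most `n`. -/
def InjDimLE : ℕ → ModuleCat.{0} Λ → Prop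
  | 0, M => Module.Injective Λ ↥M
  | n + 1, M => ∃ (I : ModuleCat.{0} Λ) (f : ↥M →ₗ[Λ] ↥I), Module.Injective Λ ↥I ∧
      Function.Injective f ∧ InjDimLE n (ModuleCat.of Λ (↥I ⧸ LinearMap.range f))

/-- `Λ` has finite global dimension. -/
def FiniteGlobalDim : Prop :=
  ∃ n, ∀ M : ModuleCat.{0} Λ, ProjDimLE Λ n M

/-- `Λ` is hereditary: submodules of projective modules are projective. -/
def IsHereditaryAlg : Prop :=
  ∀ (P : ModuleCat.{0} Λ), Module.Projective Λ ↥P → ∀ N : Submodule Λ ↥P, Module.Projective Λ ↥N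

/-- A module is uniserial if its submodules form a chain. -/
def IsUniserial (M : Type) [AddCommGroup M] [Module Λ M] : Prop :=
  ∀ N₁ N₂ : Submodule Λ M, N₁ ≤ N₂ ∨ N₂ ≤ N₁

/-- `Λ` is a Nakayama algebra: indecomposable projective and indecomposable injective
modules are uniserial. -/
def IsNakayamaAlg : Prop :=
  ∀ M : ModuleCat.{0} Λ, IsIndec Λ ↥M →
    (Module.Projective Λ ↥M ∨ Module.Injective Λ ↥M) → IsUniserial Λ ↥M

/-- `Λ` is connected: no nontrivial central idempotents. -/
def IsConnectedAlg : Prop :=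
  ∀ e : Λ, IsIdempotentElem e → e ∈ Subring.center Λ → e = 0 ∨ e = 1

/-- `e` is a primitive idempotent. -/
def IsPrimitiveIdempotent (e : Λ) : Prop :=
  IsIdempotentElem e ∧ e ≠ 0 ∧
    ¬ ∃ e₁ e₂ : Λ, IsIdempotentElem e₁ ∧ IsIdempotentElem e₂ ∧ e₁ ≠ 0 ∧ e₂ ≠ 0 ∧
      e₁ * e₂ = 0 ∧ e₂ * e₁ = 0 ∧ e = e₁ + e₂

/-- `Λ` is basic: distinct orthogonal primitive idempotents give non-isomorphic
indecomposable projectives. -/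
def IsBasicAlg : Prop :=
  ∀ e f : Λ, IsPrimitiveIdempotent Λ e → IsPrimitiveIdempotent Λ f → e * f = 0 → f * e = 0 →
    Nonempty ((Submodule.span Λ ({e} : Set Λ)) ≃ₗ[Λ] (Submodule.span Λ ({f} : Set Λ))) → e = f

end ARPrelude


section Helpers
set_option linter.unusedSectionVars false
set_option linter.unusedVariables false

variable {Λ : Type} [Ring Λ]

local notation "Jac" => Ideal.jacobson (⊥ : Ideal Λ)

/-- The Jacobson radical is closed under right multiplication. -/
lemma jac_mul_mem {a : Λ} (ha : a ∈ Jac) (c : Λ) : a * c ∈ Jac := by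
  rw [Ideal.jacobson, Submodule.mem_sInf]
  rintro m ⟨-, hm⟩
  haveI : IsSimpleModule Λ (Λ ⧸ m) := isSimpleModule_iff_isCoatom.mpr hm.out
  set φ : Λ →ₗ[Λ] (Λ ⧸ m) := LinearMap.toSpanSingleton Λ (Λ ⧸ m) (Submodule.Quotient.mk c)
  have hφ : ∀ x : Λ, φ x = Submodule.Quotient.mk (x * c) := by
    intro x
    show x • (Submodule.Quotient.mk c : Λ ⧸ m) = _
    rw [← Submodule.Quotient.mk_smul]
    rfl
  by_cases h0 : φ = 0
  · have := hφ a
    rw [h0] at this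
    simpa [Submodule.Quotient.mk_eq_zero] using this.symm
  · have hsurj := LinearMap.surjective_of_ne_zero h0
    have hco : IsCoatom (LinearMap.ker φ) := LinearMap.isCoatom_ker_of_surjective hsurj
    have hmem : a ∈ LinearMap.ker φ := by
      rw [Ideal.jacobson, Submodule.mem_sInf] at ha
      exact ha _ ⟨bot_le, ⟨hco⟩⟩
    have : φ a = 0 := hmem
    rw [hφ a, Submodule.Quotient.mk_eq_zero] at this
    exact this

/-- Annihilator of Jac, as a submodule. -/
def annJac (M : Type) [AddCommGroup M] [Module Λ M] : Submodule Λ M where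
  carrier := {x | ∀ a ∈ Jac, a • x = 0}
  add_mem' hx hy a ha := by rw [smul_add, hx a ha, hy a ha, add_zero]
  zero_mem' a _ := smul_zero a
  smul_mem' c x hx a ha := by
    rw [smul_smul]
    exact hx (a * c) (jac_mul_mem ha c)

variable (hr2 : RadicalSquareZero Λ)
include hr2

lemma radSub_le_annJac (M : Type) [AddCommGroup M] [Module Λ M] :
    radSub Λ M ≤ annJac M := by
  rw [radSub, Submodule.span_le]
  rintro x ⟨a, ha, m, rfl⟩ b hb
  rw [smul_smul]
  rw [hr2 b hb a ha, zero_smul]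

lemma rad_smul_rad {M : Type} [AddCommGroup M] [Module Λ M] {a : Λ} (ha : a ∈ Jac)
    {x : M} (hx : x ∈ radSub Λ M) : a • x = 0 :=
  radSub_le_annJac hr2 M hx a ha

omit hr2 in
lemma map_radSub_le {A B : Type} [AddCommGroup A] [Module Λ A] [AddCommGroup B] [Module Λ B]
    (φ : A →ₗ[Λ] B) : Submodule.map φ (radSub Λ A) ≤ radSub Λ B := by
  rw [Submodule.map_le_iff_le_comap, radSub, Submodule.span_le]
  rintro x ⟨a, ha, m, rfl⟩
  show φ (a • m) ∈ radSub Λ B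
  rw [map_smul]
  exact Submodule.subset_span ⟨a, ha, φ m, rfl⟩

omit hr2 in
lemma radSub_le_comap {A B : Type} [AddCommGroup A] [Module Λ A] [AddCommGroup B] [Module Λ B]
    (φ : A →ₗ[Λ] B) : radSub Λ A ≤ Submodule.comap φ (radSub Λ B) :=
  Submodule.map_le_iff_le_comap.mp (map_radSub_le φ)

/-- Nakayama with radical square zero: `radSub` is superfluous. -/
lemma radSub_superfluous {P : Type} [AddCommGroup P] [Module Λ P] {N : Submodule Λ P}
    (h : N ⊔ radSub Λ P = ⊤) : N = ⊤ := by
  have hle : radSub Λ P ≤ N := by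
    rw [radSub, Submodule.span_le]
    rintro x ⟨a, ha, m, rfl⟩
    have hm : m ∈ N ⊔ radSub Λ P := h ▸ Submodule.mem_top
    obtain ⟨n, hn, y, hy, rfl⟩ := Submodule.mem_sup.mp hm
    rw [smul_add, rad_smul_rad hr2 ha hy, add_zero]
    exact N.smul_mem a hn
  rw [← h, sup_eq_left.mpr hle]

lemma subsingleton_of_radSub_eq_top {Q : Type} [AddCommGroup Q] [Module Λ Q]
    (h : radSub Λ Q = ⊤) : ∀ x : Q, x = 0 := by
  have hle : radSub Λ Q ≤ ⊥ := by
    rw [radSub, Submodule.span_le]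
    rintro x ⟨a, ha, m, rfl⟩
    have : m ∈ radSub Λ Q := h ▸ Submodule.mem_top
    simpa using rad_smul_rad hr2 ha this
  intro x
  simpa using hle (h ▸ (Submodule.mem_top : x ∈ ⊤))

omit hr2 in
lemma jac_eq_finite_inf [IsArtinianRing Λ] [Nontrivial Λ] :
    ∃ s : Finset (Ideal Λ), s.Nonempty ∧ (∀ J ∈ s, J.IsMaximal) ∧ s.inf id = Jac := by
  obtain ⟨m0, hm0⟩ := Ideal.exists_maximal Λ
  set 𝒮 : Set (Ideal Λ) :=
    {I | ∃ t : Finset (Ideal Λ), t.Nonempty ∧ (∀ J ∈ t, J.IsMaximal) ∧ t.inf id = I} with h𝒮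
  have hne : 𝒮.Nonempty := ⟨m0, {m0}, ⟨m0, Finset.mem_singleton_self m0⟩,
    by simp [hm0], by simp⟩
  obtain ⟨J₀, hJ₀, hmin⟩ := IsArtinian.set_has_minimal 𝒮 hne
  obtain ⟨t, htne, htmax, htinf⟩ := hJ₀
  rw [← htinf] at hmin
  refine ⟨t, htne, htmax, ?_⟩
  apply le_antisymm
  · -- J₀ ≤ Jac
    rw [Ideal.jacobson]
    apply le_sInf
    rintro m ⟨-, hm⟩
    classical
    have hmem : t.inf id ⊓ m ∈ 𝒮 := ⟨insert m t, ⟨m, Finset.mem_insert_self m t⟩,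
      by intro J hJ; rcases Finset.mem_insert.mp hJ with rfl | hJ; exact hm; exact htmax J hJ,
      by rw [Finset.inf_insert, inf_comm]; rfl⟩
    have := hmin _ hmem
    have heq : t.inf id ⊓ m = t.inf id := by
      by_contra hne'
      exact this (lt_of_le_of_ne inf_le_left hne')
    rw [← heq]
    exact inf_le_right
  · -- Jac ≤ J₀
    apply Finset.le_inf
    intro J hJ
    rw [Ideal.jacobson]
    exact sInf_le ⟨bot_le, htmax J hJ⟩

omit hr2 in
lemma isSemisimple_quot_jac [IsArtinianRing Λ] [Nontrivial Λ] :
    IsSemisimpleModule Λ (Λ ⧸ Jac) := by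
  classical
  obtain ⟨s, hsne, hsmax, hsinf⟩ := jac_eq_finite_inf (Λ := Λ)
  set φ : Λ →ₗ[Λ] ((J : s) → Λ ⧸ (J.1 : Ideal Λ)) :=
    LinearMap.pi (fun J => (J.1 : Ideal Λ).mkQ) with hφ
  have hker : LinearMap.ker φ = Jac := by
    ext a
    rw [hφ, LinearMap.ker_pi, Submodule.mem_iInf, ← hsinf, Finset.inf_eq_iInf]
    simp only [Submodule.ker_mkQ, Submodule.mem_iInf, id]
    exact ⟨fun h J hJ => h ⟨J, hJ⟩, fun h J => h J.1 J.2⟩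
  haveI : ∀ J : s, IsSimpleModule Λ (Λ ⧸ (J.1 : Ideal Λ)) := fun J =>
    isSimpleModule_iff_isCoatom.mpr (hsmax J.1 J.2).out
  haveI : IsSemisimpleModule Λ ((J : s) → Λ ⧸ (J.1 : Ideal Λ)) := by
    apply isSemisimpleModule_of_isSemisimpleModule_submodule'
      (p := fun J : s => LinearMap.range (LinearMap.single Λ (fun J : s => Λ ⧸ (J.1 : Ideal Λ)) J))
    · intro J
      have hinj : Function.Injective (LinearMap.single Λ (fun J : s => Λ ⧸ (J.1 : Ideal Λ)) J) :=
        LinearMap.ker_eq_bot.mp (LinearMap.ker_single Λ _ J)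
      exact IsSemisimpleModule.congr (LinearEquiv.ofInjective _ hinj).symm
    · exact LinearMap.iSup_range_single Λ _
  have e : (Λ ⧸ LinearMap.ker φ) ≃ₗ[Λ] LinearMap.range φ := φ.quotKerEquivRange
  rw [← hker]
  exact IsSemisimpleModule.congr (N := Λ ⧸ LinearMap.ker φ) (M := ↥(LinearMap.range φ)) e

omit hr2 in
/-- A module killed by the radical over an artinian ring is semisimple. -/
lemma isSemisimple_of_jac_ann [IsArtinianRing Λ] [Nontrivial Λ]
    {X : Type} [AddCommGroup X] [Module Λ X]
    (hX : ∀ a ∈ Jac, ∀ x : X, a • x = 0) : IsSemisimpleModule Λ X := by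
  haveI := isSemisimple_quot_jac (Λ := Λ)
  apply isSemisimpleModule_of_isSemisimpleModule_submodule'
    (p := fun x : X => Submodule.span Λ {x})
  · intro x
    set ψ : (Λ ⧸ Jac) →ₗ[Λ] X :=
      Submodule.liftQ Jac (LinearMap.toSpanSingleton Λ X x) (by intro a ha; exact hX a ha x) with hψ
    have hr : Submodule.span Λ {x} = LinearMap.range ψ := by
      rw [LinearMap.span_singleton_eq_range, hψ]; exact (Submodule.range_liftQ ..).symm
    rw [hr]
    exact IsSemisimpleModule.range ψ
  · rw [eq_top_iff]
    intro x _
    exact Submodule.mem_iSup_of_mem x (Submodule.mem_span_singleton_self x)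

/-- A superfluous submodule is contained in the radical. -/
lemma superfluous_le_radSub [IsArtinianRing Λ] [Nontrivial Λ]
    {P : Type} [AddCommGroup P] [Module Λ P] {N : Submodule Λ P}
    (hN : ∀ C : Submodule Λ P, C ⊔ N = ⊤ → C = ⊤) : N ≤ radSub Λ P := by
  set R := radSub Λ P
  haveI : IsSemisimpleModule Λ (P ⧸ R) := by
    apply isSemisimple_of_jac_ann
    intro a ha x
    obtain ⟨p, rfl⟩ := Submodule.mkQ_surjective R x
    rw [← map_smul, Submodule.mkQ_apply, Submodule.Quotient.mk_eq_zero]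
    exact Submodule.subset_span ⟨a, ha, p, rfl⟩
  set Nb := Submodule.map R.mkQ N with hNb
  obtain ⟨Cb, hcompl⟩ := exists_isCompl Nb
  set C := Submodule.comap R.mkQ Cb with hC
  have hsup : C ⊔ N ⊔ R = ⊤ := by
    rw [eq_top_iff]
    intro p _
    have hp : R.mkQ p ∈ Nb ⊔ Cb := by rw [hcompl.sup_eq_top]; trivial
    obtain ⟨nb, hnb, cb, hcb, hsum⟩ := Submodule.mem_sup.mp hp
    obtain ⟨n, hn, rfl⟩ := hNb ▸ hnb
    have hcmem : p - n ∈ C := by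
      rw [hC, Submodule.mem_comap, map_sub, ← hsum]
      simpa using hcb
    have hmem : p ∈ (C ⊔ N : Submodule Λ P) := by
      have := Submodule.add_mem (C ⊔ N) (Submodule.mem_sup_left hcmem)
        (Submodule.mem_sup_right hn)
      simpa using this
    exact Submodule.mem_sup_left hmem
  have hCN : C ⊔ N = ⊤ := radSub_superfluous hr2 hsup
  have hCtop : C = ⊤ := hN C hCN
  have hCbtop : Cb = ⊤ := by
    rw [eq_top_iff]
    intro x _
    obtain ⟨p, rfl⟩ := Submodule.mkQ_surjective R x
    have : p ∈ C := hCtop ▸ Submodule.mem_top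
    exact this
  have hNbbot : Nb = ⊥ := by
    have := hcompl.inf_eq_bot
    rw [hCbtop, inf_top_eq] at this
    exact this
  intro n hn
  have : R.mkQ n ∈ Nb := Submodule.mem_map_of_mem hn
  rw [hNbbot, Submodule.mem_bot] at this
  rwa [Submodule.mkQ_apply, Submodule.Quotient.mk_eq_zero] at this

/-- The descent lemma: if `S` is a nontrivial module admitting a projective (pre)cover
`π : P' → S` with superfluous kernel such that `S` is a direct summand of `ker π`,
then no module having `S` as a direct summand has finite projective dimension. -/
lemma descent {S P' : Type} [AddCommGroup S] [Module Λ S] [AddCommGroup P'] [Module Λ P']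
    [IsNoetherian Λ P'] (hS : Nontrivial S)
    (hproj : Module.Projective Λ P') (π : P' →ₗ[Λ] S) (hπ : Function.Surjective π)
    (hsfl : ∀ N : Submodule Λ P', N ⊔ LinearMap.ker π = ⊤ → N = ⊤)
    (w : S →ₗ[Λ] ↥(LinearMap.ker π)) (v : ↥(LinearMap.ker π) →ₗ[Λ] S)
    (hvw : ∀ s, v (w s) = s) :
    ∀ (n : ℕ) (X : ModuleCat.{0} Λ) (j : S →ₗ[Λ] ↥X) (q : ↥X →ₗ[Λ] S),
      (∀ s, q (j s) = s) → ¬ ProjDimLE Λ n X := by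
  intro n
  induction n with
  | zero =>
    intro X j q hqj hpd
    have hXproj : Module.Projective Λ ↥X := hpd
    have hSproj : Module.Projective Λ S :=
      Module.Projective.of_split j q (LinearMap.ext hqj)
    obtain ⟨σ, hσ⟩ := Module.projective_lifting_property π LinearMap.id hπ
    have hσsurj : Function.Surjective σ := by
      have hsup : LinearMap.range σ ⊔ LinearMap.ker π = ⊤ := by
        rw [eq_top_iff]
        intro p _
        refine Submodule.mem_sup.mpr ⟨σ (π p), ⟨π p, rfl⟩, p - σ (π p), ?_, by abel⟩
        rw [LinearMap.mem_ker, map_sub, ← LinearMap.comp_apply, hσ, LinearMap.id_apply,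
          sub_self]
      have := hsfl _ hsup
      rwa [LinearMap.range_eq_top] at this
    have hker : ∀ x : P', π x = 0 → x = 0 := by
      intro x hx
      obtain ⟨y, rfl⟩ := hσsurj x
      have : π (σ y) = y := by rw [← LinearMap.comp_apply, hσ]; rfl
      rw [hx] at this
      rw [← this, map_zero]
    obtain ⟨s₁, s₂, hne⟩ := hS
    apply hne
    have h1 : (w s₁ : P') = 0 := hker _ (w s₁).2
    have h2 : (w s₂ : P') = 0 := hker _ (w s₂).2
    have : w s₁ = w s₂ := Subtype.ext (h1.trans h2.symm)
    rw [← hvw s₁, ← hvw s₂, this]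
  | succ n ih =>
    intro X j q hqj hpd
    obtain ⟨Qm, h, hQproj, hhsurj, hker_pd⟩ := hpd
    -- lift `j ∘ π` through `h`
    obtain ⟨α, hα⟩ := Module.projective_lifting_property (R := Λ) (P := P') h (j ∘ₗ π) hhsurj
    haveI := hQproj
    obtain ⟨β, hβ⟩ := Module.projective_lifting_property π (q ∘ₗ h) hπ
    set θ : P' →ₗ[Λ] P' := β ∘ₗ α with hθ
    have hπθ : ∀ p, π (θ p) = π p := by
      intro p
      have : π (β (α p)) = q (h (α p)) := LinearMap.congr_fun hβ (α p)
      rw [hθ]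
      simp only [LinearMap.comp_apply] at this ⊢
      rw [this]
      have : h (α p) = j (π p) := LinearMap.congr_fun hα p
      rw [this, hqj]
    have hθsurj : Function.Surjective θ := by
      have hsup : LinearMap.range θ ⊔ LinearMap.ker π = ⊤ := by
        rw [eq_top_iff]
        intro p _
        refine Submodule.mem_sup.mpr ⟨θ p, ⟨p, rfl⟩, p - θ p, ?_, by abel⟩
        rw [LinearMap.mem_ker, map_sub, hπθ, sub_self]
      have := hsfl _ hsup
      rwa [LinearMap.range_eq_top] at this
    have hθinj : Function.Injective θ :=
      IsNoetherian.injective_of_surjective_endomorphism θ hθsurj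
    -- restrictions
    have hθmem : ∀ x ∈ LinearMap.ker π, θ x ∈ LinearMap.ker π := by
      intro x hx
      rw [LinearMap.mem_ker, hπθ]
      exact hx
    set θr : ↥(LinearMap.ker π) →ₗ[Λ] ↥(LinearMap.ker π) := θ.restrict hθmem with hθr
    have hθrbij : Function.Bijective θr := by
      constructor
      · intro x y hxy
        apply Subtype.ext
        apply hθinj
        have := congrArg (Subtype.val) hxy
        simpa [hθr, LinearMap.restrict_apply] using this
      · rintro ⟨k, hk⟩
        obtain ⟨p, hp⟩ := hθsurj k
        have hpk : p ∈ LinearMap.ker π := by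
          rw [LinearMap.mem_ker, ← hπθ, hp]
          exact hk
        exact ⟨⟨p, hpk⟩, Subtype.ext (by simpa [hθr, LinearMap.restrict_apply] using hp)⟩
    set eθ := LinearEquiv.ofBijective θr hθrbij with heθ
    have hαmem : ∀ x ∈ LinearMap.ker π, α x ∈ LinearMap.ker h := by
      intro x hx
      rw [LinearMap.mem_ker]
      have : h (α x) = j (π x) := LinearMap.congr_fun hα x
      rw [this, (LinearMap.mem_ker).mp hx, map_zero]
    have hβmem : ∀ x ∈ LinearMap.ker h, β x ∈ LinearMap.ker π := by
      intro x hx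
      rw [LinearMap.mem_ker]
      have : π (β x) = q (h x) := LinearMap.congr_fun hβ x
      rw [this, (LinearMap.mem_ker).mp hx, map_zero]
    set αr : ↥(LinearMap.ker π) →ₗ[Λ] ↥(LinearMap.ker h) := α.restrict hαmem
    set βr : ↥(LinearMap.ker h) →ₗ[Λ] ↥(LinearMap.ker π) := β.restrict hβmem
    have hβα : ∀ x : ↥(LinearMap.ker π), βr (αr x) = θr x := by
      intro x
      apply Subtype.ext
      simp [αr, βr, hθr, LinearMap.restrict_apply, hθ]
    set j' : S →ₗ[Λ] ↥(LinearMap.ker h) := αr ∘ₗ w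
    set q' : ↥(LinearMap.ker h) →ₗ[Λ] S := v ∘ₗ (eθ.symm : _ →ₗ[Λ] _) ∘ₗ βr
    have hq'j' : ∀ s, q' (j' s) = s := by
      intro s
      show v (eθ.symm (βr (αr (w s)))) = s
      rw [hβα]
      have : eθ.symm (θr (w s)) = w s := by
        have : θr (w s) = eθ (w s) := rfl
        rw [this, LinearEquiv.symm_apply_apply]
      rw [this, hvw]
    exact ih (ModuleCat.of Λ ↥(LinearMap.ker h)) j' q' hq'j' hker_pd

end Helpers

/-- Over an Artin algebra of finite global dimension with radical square
zero, an indecomposable module with simple top has no common nonzero direct summand in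
the first two terms of its minimal projective resolution. -/
theorem simple_top_no_common_summand
    (Λ : Type) [Ring Λ] [IsArtinianRing Λ] (hr2 : RadicalSquareZero Λ)
    (hgl : FiniteGlobalDim Λ)
    (M : Type) [AddCommGroup M] [Module Λ M] [Module.Finite Λ M]
    (hMi : IsIndec Λ M) (htop : IsSimpleModule Λ (M ⧸ radSub Λ M))
    (P0 : Type) [AddCommGroup P0] [Module Λ P0] (f : P0 →ₗ[Λ] M) (hf : IsProjCover Λ f)
    (P1 : Type) [AddCommGroup P1] [Module Λ P1]
    (g : P1 →ₗ[Λ] ↥(LinearMap.ker f)) (hg : IsProjCover Λ g) :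
    ∀ (Q : Type) [AddCommGroup Q] [Module Λ Q], Nontrivial Q →
      IsDSummand Λ Q P0 → IsDSummand Λ Q P1 → False := by
  intro Q _ _ hQnt hQ0 hQ1
  by_cases hΛtriv : Subsingleton Λ
  · obtain ⟨x, y, hxy⟩ := hQnt
    have hz : ∀ z : Q, z = 0 := by
      intro z
      calc z = (1 : Λ) • z := (one_smul _ _).symm
        _ = (0 : Λ) • z := by rw [Subsingleton.elim (1 : Λ) 0]
        _ = 0 := zero_smul _ _
    exact hxy ((hz x).trans (hz y).symm)
  haveI : Nontrivial Λ := not_subsingleton_iff_nontrivial.mp hΛtriv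
  obtain ⟨i0, r0, hir0⟩ := hQ0
  obtain ⟨i1, r1, hir1⟩ := hQ1
  have hir0' : ∀ x : Q, r0 (i0 x) = x := fun x => LinearMap.congr_fun hir0 x
  have hir1' : ∀ x : Q, r1 (i1 x) = x := fun x => LinearMap.congr_fun hir1 x
  obtain ⟨n, hn⟩ := hgl
  -- kernels are inside the radical
  have hkf : LinearMap.ker f ≤ radSub Λ P0 :=
    superfluous_le_radSub hr2 (fun C hC => hf.superfluous C hC)
  have hkg : LinearMap.ker g ≤ radSub Λ P1 :=
    superfluous_le_radSub hr2 (fun C hC => hg.superfluous C hC)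
  -- the map to the top of M
  set S := M ⧸ radSub Λ M with hSdef
  set π : P0 →ₗ[Λ] S := (radSub Λ M).mkQ ∘ₗ f with hπdef
  have hπsurj : Function.Surjective π :=
    (Submodule.mkQ_surjective _).comp hf.surj
  have hmapf : Submodule.map f (radSub Λ P0) = radSub Λ M := by
    apply le_antisymm (map_radSub_le f)
    rw [radSub, Submodule.span_le]
    rintro x ⟨a, ha, m, rfl⟩
    obtain ⟨p, rfl⟩ := hf.surj m
    exact ⟨a • p, Submodule.subset_span ⟨a, ha, p, rfl⟩, by rw [map_smul]⟩
  have hcomap : Submodule.comap f (radSub Λ M) ≤ radSub Λ P0 := by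
    intro x hx
    have : f x ∈ Submodule.map f (radSub Λ P0) := by rw [hmapf]; exact hx
    obtain ⟨y, hy, hfy⟩ := this
    have hxy : x - y ∈ LinearMap.ker f := by
      rw [LinearMap.mem_ker, map_sub, hfy, sub_self]
    have := Submodule.add_mem (radSub Λ P0) hy (hkf hxy)
    simpa using this
  have hkerπ : LinearMap.ker π = radSub Λ P0 := by
    rw [hπdef, LinearMap.ker_comp, Submodule.ker_mkQ]
    exact le_antisymm hcomap (radSub_le_comap f)
  have hsfl : ∀ N : Submodule Λ P0, N ⊔ LinearMap.ker π = ⊤ → N = ⊤ := by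
    rw [hkerπ]
    exact fun N hN => radSub_superfluous hr2 hN
  -- P0 is finitely generated
  obtain ⟨T, hT⟩ := Module.Finite.fg_top (R := Λ) (M := M)
  have hfsurj := hf.surj
  choose pre hpre using hfsurj
  haveI : Module.Finite Λ P0 := by
    set N := Submodule.span Λ (pre '' ↑T) with hNdef
    have hmapN : Submodule.span Λ (↑T : Set M) ≤ Submodule.map f N := by
      rw [Submodule.span_le]
      intro m hm
      exact ⟨pre m, Submodule.subset_span (Set.mem_image_of_mem _ hm), hpre m⟩
    have hsupN : N ⊔ LinearMap.ker f = ⊤ := by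
      rw [eq_top_iff]
      intro p _
      have : f p ∈ Submodule.map f N := hmapN (hT ▸ Submodule.mem_top)
      obtain ⟨q', hq', hfq'⟩ := this
      refine Submodule.mem_sup.mpr ⟨q', hq', p - q', ?_, by abel⟩
      rw [LinearMap.mem_ker, map_sub, hfq', sub_self]
    have hNtop := hf.superfluous N hsupN
    refine ⟨?_⟩
    rw [← hNtop, hNdef]
    exact Submodule.fg_def.mpr ⟨pre '' ↑T, T.finite_toSet.image pre, rfl⟩
  haveI : IsArtinian Λ P0 := isArtinian_of_fg_of_artinian'
  haveI ssrad : IsSemisimpleModule Λ ↥(radSub Λ P0) := by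
    apply isSemisimple_of_jac_ann
    intro a ha x
    apply Subtype.ext
    show a • (x : P0) = 0
    exact rad_smul_rad hr2 ha x.2
  haveI sstop : IsSemisimpleModule Λ (P0 ⧸ radSub Λ P0) := by
    apply isSemisimple_of_jac_ann
    intro a ha x
    obtain ⟨p, rfl⟩ := Submodule.mkQ_surjective _ x
    rw [← map_smul, Submodule.mkQ_apply, Submodule.Quotient.mk_eq_zero]
    exact Submodule.subset_span ⟨a, ha, p, rfl⟩
  have hart1 : IsArtinian Λ ↥(radSub Λ P0) := inferInstance
  have hart2 : IsArtinian Λ (P0 ⧸ radSub Λ P0) := inferInstance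
  haveI : IsNoetherian Λ ↥(radSub Λ P0) :=
    ((IsSemisimpleModule.finite_tfae (R := Λ) (M := ↥(radSub Λ P0))).out 2 1).mp hart1
  haveI : IsNoetherian Λ (P0 ⧸ radSub Λ P0) :=
    ((IsSemisimpleModule.finite_tfae (R := Λ) (M := P0 ⧸ radSub Λ P0)).out 2 1).mp hart2
  haveI : IsNoetherian Λ P0 :=
    (isNoetherian_iff_submodule_quotient (radSub Λ P0)).mpr ⟨inferInstance, inferInstance⟩
  -- induced maps on tops
  set fb : (P0 ⧸ radSub Λ P0) →ₗ[Λ] S :=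
    Submodule.mapQ (radSub Λ P0) (radSub Λ M) f (radSub_le_comap f) with hfb
  have hfbmk : ∀ p : P0, fb (Submodule.Quotient.mk p) = Submodule.Quotient.mk (f p) :=
    fun p => Submodule.mapQ_apply _ _ _ _
  have hfbbij : Function.Bijective fb := by
    constructor
    · rw [← LinearMap.ker_eq_bot, eq_bot_iff]
      intro x hx
      obtain ⟨p, rfl⟩ := Submodule.Quotient.mk_surjective _ x
      rw [LinearMap.mem_ker, hfbmk, Submodule.Quotient.mk_eq_zero] at hx
      rw [Submodule.mem_bot, Submodule.Quotient.mk_eq_zero]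
      exact hcomap hx
    · intro y
      obtain ⟨m, rfl⟩ := Submodule.Quotient.mk_surjective _ y
      obtain ⟨p, rfl⟩ := hf.surj m
      exact ⟨Submodule.Quotient.mk p, hfbmk p⟩
  set i0b : (Q ⧸ radSub Λ Q) →ₗ[Λ] (P0 ⧸ radSub Λ P0) :=
    Submodule.mapQ _ _ i0 (radSub_le_comap i0) with hi0b
  set r0b : (P0 ⧸ radSub Λ P0) →ₗ[Λ] (Q ⧸ radSub Λ Q) :=
    Submodule.mapQ _ _ r0 (radSub_le_comap r0) with hr0b
  set i1b : (Q ⧸ radSub Λ Q) →ₗ[Λ] (P1 ⧸ radSub Λ P1) :=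
    Submodule.mapQ _ _ i1 (radSub_le_comap i1) with hi1b
  set r1b : (P1 ⧸ radSub Λ P1) →ₗ[Λ] (Q ⧸ radSub Λ Q) :=
    Submodule.mapQ _ _ r1 (radSub_le_comap r1) with hr1b
  have hr0i0b : ∀ x, r0b (i0b x) = x := by
    intro x
    obtain ⟨p, rfl⟩ := Submodule.Quotient.mk_surjective _ x
    rw [hi0b, Submodule.mapQ_apply, hr0b, Submodule.mapQ_apply, hir0' p]
  have hr1i1b : ∀ x, r1b (i1b x) = x := by
    intro x
    obtain ⟨p, rfl⟩ := Submodule.Quotient.mk_surjective _ x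
    rw [hi1b, Submodule.mapQ_apply, hr1b, Submodule.mapQ_apply, hir1' p]
  -- the top of Q is nontrivial
  have hradQ : radSub Λ Q ≠ ⊤ := by
    intro h
    obtain ⟨x, y, hxy⟩ := hQnt
    exact hxy ((subsingleton_of_radSub_eq_top hr2 h x).trans
      (subsingleton_of_radSub_eq_top hr2 h y).symm)
  obtain ⟨x0, hx0⟩ : ∃ x : Q, x ∉ radSub Λ Q := by
    by_contra h
    push_neg at h
    exact hradQ (Submodule.eq_top_iff'.mpr h)
  have htopQnt : (Submodule.Quotient.mk x0 : Q ⧸ radSub Λ Q) ≠ 0 := by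
    rw [Ne, Submodule.Quotient.mk_eq_zero]
    exact hx0
  -- P0 ⧸ rad is simple
  haveI hsimple : IsSimpleModule Λ (P0 ⧸ radSub Λ P0) :=
    IsSimpleModule.congr (LinearEquiv.ofBijective fb hfbbij) (N := S)
  -- i0b is bijective
  have hi0binj : Function.Injective i0b := by
    intro x y hxy
    rw [← hr0i0b x, ← hr0i0b y, hxy]
  have hi0bbij : Function.Bijective i0b := by
    refine ⟨hi0binj, ?_⟩
    have hrange : LinearMap.range i0b = ⊤ := by
      rcases eq_bot_or_eq_top (LinearMap.range i0b) with hb | ht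
      · exfalso
        have : i0b (Submodule.Quotient.mk x0) ∈ LinearMap.range i0b :=
          LinearMap.mem_range_self _ _
        rw [hb, Submodule.mem_bot] at this
        exact htopQnt (hi0binj (by rw [this, map_zero]))
      · exact ht
    exact LinearMap.range_eq_top.mp hrange
  -- the induced iso from top P1 to ker f
  have hg0 : radSub Λ P1 ≤ LinearMap.ker g := by
    rw [radSub, Submodule.span_le]
    rintro x ⟨a, ha, p, rfl⟩
    rw [SetLike.mem_coe, LinearMap.mem_ker, map_smul]
    apply Subtype.ext
    show a • ((g p : ↥(LinearMap.ker f)) : P0) = 0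
    exact rad_smul_rad hr2 ha (hkf (g p).2)
  set gb : (P1 ⧸ radSub Λ P1) →ₗ[Λ] ↥(LinearMap.ker f) :=
    Submodule.liftQ (radSub Λ P1) g hg0 with hgb
  have hgbmk : ∀ p : P1, gb (Submodule.Quotient.mk p) = g p := fun p => rfl
  have hgbinj : Function.Injective gb := by
    rw [← LinearMap.ker_eq_bot, eq_bot_iff]
    intro x hx
    obtain ⟨p, rfl⟩ := Submodule.Quotient.mk_surjective _ x
    rw [LinearMap.mem_ker, hgbmk] at hx
    rw [Submodule.mem_bot, Submodule.Quotient.mk_eq_zero]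
    exact hkg hx
  -- assemble the split mono from S into ker π
  set e0 : (Q ⧸ radSub Λ Q) ≃ₗ[Λ] S :=
    (LinearEquiv.ofBijective i0b hi0bbij).trans (LinearEquiv.ofBijective fb hfbbij) with he0
  have hkfπ : LinearMap.ker f ≤ LinearMap.ker π := by
    rw [hkerπ]
    exact hkf
  set incl : ↥(LinearMap.ker f) →ₗ[Λ] ↥(LinearMap.ker π) := Submodule.inclusion hkfπ
  set w : S →ₗ[Λ] ↥(LinearMap.ker π) :=
    incl ∘ₗ gb ∘ₗ i1b ∘ₗ (e0.symm : S →ₗ[Λ] (Q ⧸ radSub Λ Q)) with hw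
  have hi1binj : Function.Injective i1b := by
    intro x y hxy
    rw [← hr1i1b x, ← hr1i1b y, hxy]
  have hwinj : Function.Injective w := by
    have hcomp : Function.Injective (⇑incl ∘ ⇑gb ∘ ⇑i1b ∘ ⇑(e0.symm : S →ₗ[Λ] (Q ⧸ radSub Λ Q))) :=
      (Submodule.inclusion_injective hkfπ).comp (hgbinj.comp (hi1binj.comp
        (e0.symm.injective)))
    simpa [hw, LinearMap.coe_comp] using hcomp
  -- ker π is semisimple, giving a retraction
  haveI hss : IsSemisimpleModule Λ ↥(LinearMap.ker π) := by
    rw [hkerπ]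
    exact ssrad
  obtain ⟨W, hW⟩ := exists_isCompl (LinearMap.range w)
  set prj := (LinearMap.range w).linearProjOfIsCompl W hW
  set eU : S ≃ₗ[Λ] ↥(LinearMap.range w) := LinearEquiv.ofInjective w hwinj
  set v : ↥(LinearMap.ker π) →ₗ[Λ] S := (eU.symm : _ →ₗ[Λ] _) ∘ₗ prj with hv
  have hvw : ∀ s : S, v (w s) = s := by
    intro s
    have h1 : prj (w s) = eU s := by
      have hmem : w s ∈ LinearMap.range w := LinearMap.mem_range_self _ _
      have heq : (⟨w s, hmem⟩ : ↥(LinearMap.range w)) = eU s :=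
        Subtype.ext (by rw [LinearEquiv.ofInjective_apply])
      have := Submodule.linearProjOfIsCompl_apply_left hW (⟨w s, hmem⟩ : ↥(LinearMap.range w))
      rw [← heq]
      exact this
    rw [hv]
    show eU.symm (prj (w s)) = s
    rw [h1, LinearEquiv.symm_apply_apply]
  -- S is nontrivial
  haveI : Nontrivial S := IsSimpleModule.nontrivial Λ S
  -- conclude using the descent lemma
  exact descent hr2 ‹Nontrivial S› hf.proj π hπsurj hsfl w v hvw n
    (ModuleCat.of Λ ↥(LinearMap.ker π)) w v hvw (hn _)
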